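/- (Projection slice theorem) For f : ℝ² → ℝ integrable with compact support, the 1-dimensional Fourier transform of s ↦ P(f)(θ, s) evaluated at frequency σ equals the 2-dimensional Fourier transform of f evaluated at σ·(cos θ, sin θ). -/

import Mathlib

open MeasureTheory Real Complex

/-- Parallel-beam ray transform. -/
noncomputable def rayTransform (f : ℝ × ℝ → ℝ) (θ s : ℝ) : ℝ :=
  ∫ t : ℝ, f (s * Real.cos θ - t * Real.sin θ, s * Real.sin θ + t * Real.cos θ)

/-- Projection slice theorem: the 1D Fourier transform of `s ↦ P(f)(θ, s)` at frequency `σ`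
equals the 2D Fourier transform of `f` at `σ · (cos θ, sin θ)`. -/
theorem projection_slice
    (f : ℝ × ℝ → ℝ) (hf : Integrable f) (hfs : HasCompactSupport f) (θ σ : ℝ) :
    (∫ s : ℝ, (rayTransform f θ s : ℂ) * Complex.exp (-2 * Real.pi * Complex.I * σ * s))
      = ∫ x : ℝ × ℝ, (f x : ℂ) *
          Complex.exp (-2 * Real.pi * Complex.I *
            (x.1 * (σ * Real.cos θ) + x.2 * (σ * Real.sin θ))) := by
  set c : Circle := Circle.exp θ with hc
  set T : (ℝ × ℝ) ≃ᵐ (ℝ × ℝ) :=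
    (Complex.measurableEquivRealProd.symm.trans
      ((rotation c).toHomeomorph.toMeasurableEquiv.trans Complex.measurableEquivRealProd)) with hTdef
  have hT : MeasurePreserving T :=
    (Complex.volume_preserving_equiv_real_prod.comp
      ((rotation c).measurePreserving.comp Complex.volume_preserving_equiv_real_prod.symm))
  have hTcoord : ∀ p : ℝ × ℝ,
      T p = (p.1 * Real.cos θ - p.2 * Real.sin θ, p.1 * Real.sin θ + p.2 * Real.cos θ) := by
    intro p
    simp only [hTdef, MeasurableEquiv.trans_apply, Homeomorph.toMeasurableEquiv_coe,
      LinearIsometryEquiv.coe_toHomeomorph, rotation_apply, hc]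
    have : (Circle.exp θ : ℂ) = Real.cos θ + Real.sin θ * Complex.I := by
      rw [Circle.coe_exp, Complex.exp_mul_I]
      push_cast; ring
    rw [this]
    ext <;>
      simp [Complex.measurableEquivRealProd, Complex.equivRealProd,
        Complex.mul_re, Complex.mul_im, Complex.cos_ofReal_re, Complex.sin_ofReal_re] <;> ring
  -- phase identity
  have hphase : ∀ p : ℝ × ℝ,
      Complex.exp (-2 * Real.pi * Complex.I * σ * p.1) =
        Complex.exp (-2 * Real.pi * Complex.I *
          ((T p).1 * (σ * Real.cos θ) + (T p).2 * (σ * Real.sin θ))) := by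
    intro p
    rw [hTcoord p]
    congr 1
    have h : Complex.sin θ ^ 2 + Complex.cos θ ^ 2 = 1 := Complex.sin_sq_add_cos_sq θ
    push_cast
    linear_combination (2 * (Real.pi : ℂ) * Complex.I * σ * p.1) * h
  -- integrability
  have hfT : Integrable (fun p => f (T p)) :=
    (hT.integrable_comp_emb T.measurableEmbedding).mpr hf
  have hInt2 : Integrable (fun p : ℝ × ℝ =>
      (f (T p) : ℂ) * Complex.exp (-2 * Real.pi * Complex.I * σ * p.1)) := by
    have hb : Integrable (fun p : ℝ × ℝ =>
        Complex.exp (-2 * Real.pi * Complex.I * σ * p.1) * (f (T p) : ℂ)) := by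
      apply Integrable.bdd_mul (c := 1) hfT.ofReal
      · exact (Complex.continuous_exp.comp (by continuity)).aestronglyMeasurable
      · refine Filter.Eventually.of_forall fun p => ?_
        rw [Complex.norm_exp]
        have : (-2 * (Real.pi : ℂ) * Complex.I * σ * p.1).re = 0 := by simp
        rw [this, Real.exp_zero]
    refine hb.congr (Filter.Eventually.of_forall fun p => ?_)
    exact mul_comm _ _
  -- main computation
  calc (∫ s : ℝ, (rayTransform f θ s : ℂ) * Complex.exp (-2 * Real.pi * Complex.I * σ * s))
      = ∫ s : ℝ, ∫ t : ℝ, (f (T (s, t)) : ℂ) * Complex.exp (-2 * Real.pi * Complex.I * σ * s) := by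
        refine integral_congr_ae (Filter.Eventually.of_forall fun s => ?_)
        refine Eq.symm ?_
        have h1 : ∀ t : ℝ, (f (T (s, t)) : ℂ)
            = ((f (s * Real.cos θ - t * Real.sin θ, s * Real.sin θ + t * Real.cos θ) : ℝ) : ℂ) :=
          fun t => by rw [hTcoord (s, t)]
        simp_rw [h1]
        rw [integral_mul_const]
        simp only [rayTransform]
        exact congrArg (fun z : ℂ => z * Complex.exp (-2 * Real.pi * Complex.I * σ * s))
          integral_ofReal
    _ = ∫ p : ℝ × ℝ, (f (T p) : ℂ) * Complex.exp (-2 * Real.pi * Complex.I * σ * p.1) := by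
        have hInt3 : Integrable (Function.uncurry fun s t : ℝ =>
            (f (T (s, t)) : ℂ) * Complex.exp (-2 * Real.pi * Complex.I * σ * s))
            (volume.prod volume) := by
          rw [← Measure.volume_eq_prod]; exact hInt2
        rw [Measure.volume_eq_prod]
        exact MeasureTheory.integral_integral hInt3
    _ = ∫ p : ℝ × ℝ, (f (T p) : ℂ) * Complex.exp (-2 * Real.pi * Complex.I *
          ((T p).1 * (σ * Real.cos θ) + (T p).2 * (σ * Real.sin θ))) := by
        refine integral_congr_ae (Filter.Eventually.of_forall fun p => ?_)
        exact congrArg (fun z => (f (T p) : ℂ) * z) (hphase p)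
    _ = ∫ x : ℝ × ℝ, (f x : ℂ) * Complex.exp (-2 * Real.pi * Complex.I *
          (x.1 * (σ * Real.cos θ) + x.2 * (σ * Real.sin θ))) :=
        hT.integral_comp T.measurableEmbedding (fun x => (f x : ℂ) * Complex.exp
          (-2 * Real.pi * Complex.I * (x.1 * (σ * Real.cos θ) + x.2 * (σ * Real.sin θ))))
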